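/- Let p be a prime, q = p^ℓ a power of p, and t ≤ s ≤ d integers with q ≤ s+1 and s ≡ t (mod q). Then the minrank over F_p of the graph K_q(d,s,t) is at most C(d, q-1). -/

import Mathlib

/-- A matrix `M` over a field `F` represents a simple graph `G` if all diagonal entries are
nonzero and entries at distinct non-adjacent pairs of vertices are zero. -/
def Represents {V F : Type*} [Field F] (G : SimpleGraph V) (M : Matrix V V F) : Prop :=
  (∀ v, M v v ≠ 0) ∧ ∀ u v : V, u ≠ v → ¬G.Adj u v → M u v = 0

/-- The minrank of a simple graph `G` over a field `F`. -/
noncomputable def minrank (F : Type*) [Field F] {V : Type*} [Fintype V] [DecidableEq V]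
    (G : SimpleGraph V) : ℕ :=
  sInf {r : ℕ | ∃ M : Matrix V V F, Represents G M ∧ M.rank = r}

/-- The generalized Kneser graph `K(d, s, T)`: vertices are the `s`-subsets of `[d]`, and two
distinct sets are adjacent iff the size of their intersection lies in `T`. -/
def kneser (d s : ℕ) (T : Set ℕ) : SimpleGraph {A : Finset (Fin d) // A.card = s} where
  Adj A B := A ≠ B ∧ (A.1 ∩ B.1).card ∈ T
  symm := ⟨fun A B h => ⟨h.1.symm, by rw [Finset.inter_comm]; exact h.2⟩⟩
  loopless := ⟨fun A h => h.1 rfl⟩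

/-- The graph `K_q(d, s, t)`: vertices are the `s`-subsets of `[d]`, and two distinct sets
`A, B` are adjacent iff `|A ∩ B| ≡ t (mod q)`. -/
def kneserMod (d s q t : ℕ) : SimpleGraph {A : Finset (Fin d) // A.card = s} where
  Adj A B := A ≠ B ∧ (A.1 ∩ B.1).card ≡ t [MOD q]
  symm := ⟨fun A B h => ⟨h.1.symm, by rw [Finset.inter_comm]; exact h.2⟩⟩
  loopless := ⟨fun A h => h.1 rfl⟩

open Matrix

lemma key_mod (q r : ℕ) (hq : 0 < q) (hr : r < q) (m : ℕ) :
    (m + (q - 1 - r)) % q = q - 1 ↔ m % q = r := by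
  rw [Nat.add_mod, Nat.mod_eq_of_lt (show q - 1 - r < q by omega)]
  have ha : m % q < q := Nat.mod_lt _ hq
  set a := m % q with haa
  constructor
  · intro h
    rcases le_or_gt a r with h1 | h1
    · rw [Nat.mod_eq_of_lt (by omega)] at h; omega
    · rw [show a + (q - 1 - r) = q + (a - r - 1) by omega, Nat.add_mod_left,
        Nat.mod_eq_of_lt (by omega)] at h
      omega
  · intro h
    rw [h, show r + (q - 1 - r) = q - 1 by omega, Nat.mod_eq_of_lt (by omega)]

lemma choose_pow_sub_one_zero_iff (p : ℕ) [Fact p.Prime] (ℓ : ℕ) (n : ℕ) :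
    ((n.choose (p ^ ℓ - 1) : ZMod p) = 0) ↔ n % p ^ ℓ ≠ p ^ ℓ - 1 := by
  have hp : p.Prime := Fact.out
  have hp1 : 1 < p := hp.one_lt
  induction ℓ generalizing n with
  | zero => simp [Nat.mod_one]
  | succ ℓ ih =>
    set q := p ^ ℓ with hqdef
    have hq : 0 < q := Nat.pow_pos (by omega)
    have hmul : p * (q - 1) = p * q - p := by rw [Nat.mul_sub, mul_one]
    have hpq : p ≤ p * q := Nat.le_mul_of_pos_right p hq
    have hk : p ^ (ℓ + 1) - 1 = (p - 1) + p * (q - 1) := by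
      rw [pow_succ, mul_comm q p]; omega
    -- digits of k = p^(ℓ+1) - 1
    have hkmod : (p ^ (ℓ + 1) - 1) % p = p - 1 := by
      rw [hk, Nat.add_mul_mod_self_left, Nat.mod_eq_of_lt (by omega)]
    have hkdiv : (p ^ (ℓ + 1) - 1) / p = q - 1 := by
      rw [hk, Nat.add_mul_div_left _ _ (by omega : 0 < p), Nat.div_eq_of_lt (by omega), zero_add]
    -- Lucas step
    have lucas := Choose.choose_modEq_choose_mod_mul_choose_div
      (n := n) (k := p ^ (ℓ + 1) - 1) (p := p)
    rw [← ZMod.intCast_eq_intCast_iff] at lucas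
    push_cast at lucas
    rw [hkmod, hkdiv] at lucas
    rw [lucas, mul_eq_zero]
    -- first factor
    have hnp : n % p < p := Nat.mod_lt _ (by omega)
    have h1 : (((n % p).choose (p - 1) : ZMod p) = 0) ↔ n % p ≠ p - 1 := by
      rcases eq_or_ne (n % p) (p - 1) with h | h
      · simp [h, Nat.choose_self]
      · have : n % p < p - 1 := by omega
        simp [Nat.choose_eq_zero_of_lt this, h]
    -- decomposition of n % (p * q)
    have e : n % (p * q) = p * ((n / p) % q) + n % p := by
      have h1' := Nat.div_add_mod n p
      have h2' := Nat.div_add_mod (n / p) q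
      have : n = (p * q) * ((n / p) / q) + (p * ((n / p) % q) + n % p) := by
        calc n = p * (n / p) + n % p := h1'.symm
        _ = p * (q * ((n / p) / q) + (n / p) % q) + n % p := by rw [h2']
        _ = (p * q) * ((n / p) / q) + (p * ((n / p) % q) + n % p) := by ring
      have hx : (n / p) % q ≤ q - 1 := by
        have := Nat.mod_lt (n / p) hq; omega
      have hlt : p * ((n / p) % q) + n % p < p * q := by
        have := Nat.mul_le_mul_left p hx
        omega
      nth_rewrite 1 [this]
      rw [Nat.mul_add_mod, Nat.mod_eq_of_lt hlt]
    have e2 : n % p ^ (ℓ + 1) = p * ((n / p) % q) + n % p := by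
      rw [pow_succ, mul_comm q p] at *; exact e
    have hx : (n / p) % q < q := Nat.mod_lt _ hq
    -- final equivalence
    rw [h1, e2, hk]
    simp only [ih (n / p)]
    constructor
    · intro h hc
      have hb : n % p = p - 1 := by
        have := congrArg (· % p) hc
        simpa [Nat.mul_add_mod, Nat.add_mul_mod_self_left,
          Nat.mod_eq_of_lt hnp, Nat.mod_eq_of_lt (show p - 1 < p by omega),
          add_comm] using this
      have ha : (n / p) % q = q - 1 := by
        have h' : p * ((n / p) % q) = p * (q - 1) := by omega
        exact Nat.eq_of_mul_eq_mul_left (by omega) h'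
      tauto
    · intro h
      by_contra hc
      push_neg at hc
      obtain ⟨hb, ha⟩ := hc
      exact h (by rw [hb, ha, add_comm])

lemma linearIndependent_int_of_zmod {p : ℕ} [Fact p.Prime] {ι m : Type*} [Fintype ι] [Fintype m]
    (w : ι → m → ℤ)
    (h : LinearIndependent (ZMod p) (fun x => (fun i => ((w x i : ZMod p)) : m → ZMod p))) :
    LinearIndependent ℤ w := by
  have hp : p.Prime := Fact.out
  have hp2 : 2 ≤ p := hp.two_le
  rw [Fintype.linearIndependent_iff] at h ⊢
  suffices H : ∀ N (g : ι → ℤ), (∀ i, (g i).natAbs ≤ N) → ∑ i, g i • w i = 0 → ∀ i, g i = 0 by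
    intro g hg i
    exact H (∑ i, (g i).natAbs) g
      (fun i => Finset.single_le_sum (f := fun i => (g i).natAbs)
        (fun _ _ => Nat.zero_le _) (Finset.mem_univ i)) hg i
  intro N
  induction N with
  | zero => intro g hg _ i; have := hg i; omega
  | succ N ih =>
    intro g hg hsum i
    have hdvd : ∀ j, (p : ℤ) ∣ g j := by
      intro j
      have h0 : ∑ x, ((g x : ZMod p)) • (fun i => ((w x i : ZMod p)) : m → ZMod p) = 0 := by
        funext k
        have hco := congrFun hsum k
        simp only [Finset.sum_apply, Pi.smul_apply, Pi.zero_apply, smul_eq_mul] at hco ⊢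
        have : ((∑ x, g x * w x k : ℤ) : ZMod p) = 0 := by rw [hco]; simp
        push_cast at this
        exact this
      have := h (fun x => (g x : ZMod p)) h0 j
      rwa [ZMod.intCast_zmod_eq_zero_iff_dvd] at this
    have hsum' : ∑ x, (g x / p) • w x = 0 := by
      have hps : (p : ℤ) • (∑ x, (g x / p) • w x) = 0 := by
        rw [Finset.smul_sum, ← hsum]
        refine Finset.sum_congr rfl fun x _ => ?_
        rw [smul_smul, Int.mul_ediv_cancel' (hdvd x)]
      rcases smul_eq_zero.mp hps with h' | h'
      · exact absurd h' (by exact_mod_cast hp.ne_zero)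
      · exact h'
    have hbound : ∀ x, ((g x / p)).natAbs ≤ N := by
      intro x
      have heq : g x = p * (g x / p) := (Int.mul_ediv_cancel' (hdvd x)).symm
      have h2 : ((p:ℤ) * (g x / (p:ℤ))).natAbs = p * (g x / (p:ℤ)).natAbs := by
        rw [Int.natAbs_mul, Int.natAbs_natCast]
      rw [← heq] at h2
      have h3 : 2 * (g x / (p:ℤ)).natAbs ≤ p * (g x / (p:ℤ)).natAbs :=
        Nat.mul_le_mul_right _ hp2
      have := hg x
      omega
    have := ih (fun x => g x / p) hbound hsum' i
    have heq : g i = p * (g i / p) := (Int.mul_ediv_cancel' (hdvd i)).symm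
    rw [heq, this, mul_zero]

lemma rank_map_zmod_le_rank_map_rat {p : ℕ} [Fact p.Prime] {m n : Type*}
    [Fintype m] [Fintype n] [DecidableEq m] [DecidableEq n] (M : Matrix m n ℤ) :
    (M.map (Int.cast : ℤ → ZMod p)).rank ≤ (M.map (Int.cast : ℤ → ℚ)).rank := by
  classical
  obtain ⟨b, hbsub, hbspan, hbli⟩ :=
    exists_linearIndependent (ZMod p) (Set.range ((M.map (Int.cast : ℤ → ZMod p))ᵀ))
  have hbfin : b.Finite := (Set.finite_range _).subset hbsub
  haveI : Fintype b := hbfin.fintype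
  -- choice of column indices
  have hchoice : ∀ x : b, ∃ j : n, (M.map (Int.cast : ℤ → ZMod p))ᵀ j = x.1 := fun x => hbsub x.2
  choose g hg using hchoice
  -- the integer columns
  set wZ : b → m → ℤ := fun x => Mᵀ (g x) with hwZ
  have hliZ : LinearIndependent ℤ wZ := by
    apply linearIndependent_int_of_zmod (p := p)
    have : (fun x : b => (fun i => ((wZ x i : ZMod p)) : m → ZMod p)) = fun x : b => x.1 := by
      funext x
      exact hg x
    rw [this]
    exact hbli
  -- map to ℚ
  set φ : (m → ℤ) →ₗ[ℤ] (m → ℚ) := LinearMap.compLeft (Algebra.linearMap ℤ ℚ) m with hφ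
  have hφinj : Function.Injective φ := by
    intro a b hab
    funext i
    have h2 := congrFun hab i
    simp only [hφ, LinearMap.compLeft_apply, Function.comp_apply, Algebra.linearMap_apply,
      algebraMap_int_eq, eq_intCast] at h2
    exact_mod_cast h2
  have hliQZ : LinearIndependent ℤ (fun x : b => φ (wZ x)) :=
    hliZ.map' φ (LinearMap.ker_eq_bot.mpr hφinj)
  have hliQ : LinearIndependent ℚ (fun x : b => φ (wZ x)) :=
    (LinearIndependent.iff_fractionRing ℤ ℚ).mp hliQZ
  -- ranks
  rw [Matrix.rank_eq_finrank_span_cols, Matrix.rank_eq_finrank_span_cols]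
  rw [show Set.range (M.map (Int.cast : ℤ → ZMod p)).col = Set.range (M.map (Int.cast : ℤ → ZMod p))ᵀ from rfl, ← hbspan]
  rw [finrank_span_set_eq_card hbli, Set.toFinset_card]
  have key : (fun x : b => φ (wZ x)) = fun x : b => (M.map (Int.cast : ℤ → ℚ))ᵀ (g x) := by
    funext x; funext i; simp [hφ, hwZ, Matrix.map, Matrix.transpose]
  have h1 : Fintype.card b = Module.finrank ℚ
      (Submodule.span ℚ (Set.range (fun x : b => φ (wZ x)))) :=
    (finrank_span_eq_card hliQ).symm
  rw [h1, key]
  apply Submodule.finrank_mono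
  apply Submodule.span_mono
  rintro _ ⟨x, rfl⟩
  exact ⟨g x, rfl⟩

/-- inclusion matrix between `a`-subsets (rows) and `b`-subsets (columns) of `Fin d`. -/
def incMat (R : Type*) [CommRing R] (d a b : ℕ) :
    Matrix {A : Finset (Fin d) // A.card = a} {S : Finset (Fin d) // S.card = b} R :=
  fun A S => if S.1 ⊆ A.1 then 1 else 0

lemma card_subsets_subtype {d j : ℕ} (C : Finset (Fin d)) :
    (Finset.univ.filter (fun S : {S : Finset (Fin d) // S.card = j} => S.1 ⊆ C)).card
      = C.card.choose j := by
  rw [← Finset.card_powersetCard]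
  apply Finset.card_bij (fun S _ => S.1)
  · intro S hS
    simp only [Finset.mem_filter] at hS
    exact Finset.mem_powersetCard.mpr ⟨hS.2, S.2⟩
  · intro S _ S' _ h
    exact Subtype.ext h
  · intro T hT
    obtain ⟨hT1, hT2⟩ := Finset.mem_powersetCard.mp hT
    exact ⟨⟨T, hT2⟩, by simp [hT1], rfl⟩

/-- `W_j W_jᵀ` has entries `C(|A ∩ B|, j)`. -/
lemma incMat_mul_transpose {R : Type*} [CommRing R] (d s j : ℕ)
    (A B : {A : Finset (Fin d) // A.card = s}) :
    (incMat R d s j * (incMat R d s j)ᵀ) A B = (((A.1 ∩ B.1).card.choose j : ℕ) : R) := by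
  rw [← card_subsets_subtype (A.1 ∩ B.1)]
  rw [Matrix.mul_apply]
  simp only [incMat, transpose_apply, ite_mul, one_mul, zero_mul]
  simp only [← ite_and, ← Finset.subset_inter_iff]
  rw [Finset.sum_boole]

lemma incMat_mul_incMat {R : Type*} [CommRing R] (d s a b : ℕ) (hb : b ≤ a)
    (A : {A : Finset (Fin d) // A.card = s}) (J : {S : Finset (Fin d) // S.card = b}) :
    (incMat R d s a * incMat R d a b) A J
      = (((s - b).choose (a - b) : ℕ) : R) * incMat R d s b A J := by
  rw [Matrix.mul_apply]
  simp only [incMat, ite_mul, one_mul, zero_mul, mul_ite, mul_one, mul_zero, ← ite_and]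
  by_cases hJA : J.1 ⊆ A.1
  · rw [if_pos hJA, Finset.sum_boole]
    congr 1
    have hcard : (Finset.univ.filter
        (fun S : {S : Finset (Fin d) // S.card = a} => J.1 ⊆ S.1 ∧ S.1 ⊆ A.1)).card
        = ((A.1 \ J.1).powersetCard (a - b)).card := by
      have jfun : ∀ T ∈ (A.1 \ J.1).powersetCard (a - b), Finset.card (T ∪ J.1) = a := by
        intro T hT
        obtain ⟨hT1, hT2⟩ := Finset.mem_powersetCard.mp hT
        rw [Finset.card_union_of_disjoint
          (Finset.disjoint_of_subset_left hT1 Finset.sdiff_disjoint), hT2, J.2]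
        omega
      refine Finset.card_bij' (fun S _ => S.1 \ J.1)
        (fun T hT => (⟨T ∪ J.1, jfun T hT⟩ : {S : Finset (Fin d) // S.card = a}))
        ?hi ?hj ?left ?right
      case hi =>
        intro S hS
        simp only [Finset.mem_filter] at hS
        refine Finset.mem_powersetCard.mpr ⟨Finset.sdiff_subset_sdiff hS.2.2 subset_rfl, ?_⟩
        rw [Finset.card_sdiff_of_subset hS.2.1, S.2, J.2]
      case hj =>
        intro T hT
        obtain ⟨hT1, hT2⟩ := Finset.mem_powersetCard.mp hT
        simp only [Finset.mem_filter, Finset.mem_univ, true_and]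
        exact ⟨Finset.subset_union_right,
          Finset.union_subset (hT1.trans Finset.sdiff_subset) hJA⟩

      case left =>
        intro S hS
        simp only [Finset.mem_filter] at hS
        exact Subtype.ext (Finset.sdiff_union_of_subset hS.2.1)
      case right =>
        intro T hT
        obtain ⟨hT1, hT2⟩ := Finset.mem_powersetCard.mp hT
        exact Finset.union_sdiff_cancel_right
          (Finset.disjoint_of_subset_left hT1 Finset.sdiff_disjoint)
    rw [hcard, Finset.card_powersetCard, Finset.card_sdiff_of_subset hJA, A.2, J.2]
  · rw [if_neg hJA]
    apply Finset.sum_eq_zero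
    intro S _
    rw [if_neg]
    rintro ⟨hJS, hSA⟩
    exact hJA (hJS.trans hSA)

lemma vandermonde_range (m c k : ℕ) :
    (m + c).choose k = ∑ j ∈ Finset.range (k + 1), m.choose j * c.choose (k - j) := by
  rw [Nat.add_choose_eq]
  exact Finset.Nat.sum_antidiagonal_eq_sum_range_succ_mk _ k

theorem minrank_kneserMod_le (p : ℕ) [Fact p.Prime] (ℓ : ℕ) (q : ℕ) (hq : q = p ^ ℓ)
    (d s t : ℕ) (hts : t ≤ s) (hsd : s ≤ d) (hqs : q ≤ s + 1) (hst : s ≡ t [MOD q]) :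
    minrank (ZMod p) (kneserMod d s q t) ≤ d.choose (q - 1) := by
  classical
  have hp : p.Prime := Fact.out
  have hq0 : 0 < q := hq ▸ Nat.pow_pos hp.pos
  set r := s % q with hr
  have hrq : r < q := Nat.mod_lt _ hq0
  set c := q - 1 - r with hc
  set V := {A : Finset (Fin d) // A.card = s}
  -- the integer matrix
  set MZ : Matrix V V ℤ := fun A B => (((A.1 ∩ B.1).card + c).choose (q - 1) : ℤ) with hMZ
  set Mp : Matrix V V (ZMod p) := MZ.map (Int.cast : ℤ → ZMod p) with hMp
  have hentry : ∀ A B : V, Mp A B = ((((A.1 ∩ B.1).card + c).choose (q - 1) : ℕ) : ZMod p) := by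
    intro A B
    simp [hMp, hMZ, Matrix.map_apply]
    exact Int.cast_natCast _
  -- Represents
  have hrep : Represents (kneserMod d s q t) Mp := by
    constructor
    · intro A
      rw [hentry A A]
      intro h0
      rw [hq] at h0
      rw [choose_pow_sub_one_zero_iff p ℓ] at h0
      rw [← hq] at h0
      apply h0
      rw [Finset.inter_self, A.2]
      exact (key_mod q r hq0 hrq s).mpr rfl
    · intro u v huv hadj
      rw [hentry u v]
      have hmod : ¬((u.1 ∩ v.1).card ≡ t [MOD q]) := fun h => hadj (And.intro huv h)
      have hmod' : (u.1 ∩ v.1).card % q ≠ r := by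
        intro h
        exact hmod (h.trans hst)
      rw [hq, choose_pow_sub_one_zero_iff p ℓ, ← hq]
      intro h
      exact hmod' ((key_mod q r hq0 hrq _).mp h)
  -- rank bound
  have hrank : Mp.rank ≤ d.choose (q - 1) := by
    refine le_trans (rank_map_zmod_le_rank_map_rat MZ) ?_
    -- factorization over ℚ
    set W : Matrix V {S : Finset (Fin d) // S.card = q - 1} ℚ := incMat ℚ d s (q - 1) with hW
    set N : Matrix {S : Finset (Fin d) // S.card = q - 1} V ℚ :=
      ∑ j ∈ Finset.range q, ((c.choose (q - 1 - j) : ℚ) * (((s - j).choose (q - 1 - j) : ℚ))⁻¹) •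
        (incMat ℚ d (q - 1) j * (incMat ℚ d s j)ᵀ) with hN
    have hfact : MZ.map (Int.cast : ℤ → ℚ) = W * N := by
      have hWN : W * N = ∑ j ∈ Finset.range q,
          ((c.choose (q - 1 - j) : ℚ)) • (incMat ℚ d s j * (incMat ℚ d s j)ᵀ) := by
        rw [hN, Matrix.mul_sum]
        refine Finset.sum_congr rfl fun j hj => ?_
        have hjq : j ≤ q - 1 := by
          have := Finset.mem_range.mp hj; omega
        have hbne : (((s - j).choose (q - 1 - j) : ℚ)) ≠ 0 := by
          have hpos : 0 < (s - j).choose (q - 1 - j) :=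
            Nat.choose_pos (by omega)
          exact_mod_cast hpos.ne'
        have hWZ : W * incMat ℚ d (q - 1) j
            = (((s - j).choose (q - 1 - j) : ℚ)) • incMat ℚ d s j := by
          funext A J
          rw [hW, incMat_mul_incMat d s (q - 1) j hjq A J, Matrix.smul_apply, smul_eq_mul]
        rw [Matrix.mul_smul, ← Matrix.mul_assoc, hWZ, Matrix.smul_mul, smul_smul]
        congr 1
        field_simp
      rw [hWN]
      funext A B
      rw [Matrix.map_apply, hMZ]
      rw [Matrix.sum_apply]
      push_cast
      have : ∀ j ∈ Finset.range q,
          (((c.choose (q - 1 - j) : ℚ)) • (incMat ℚ d s j * (incMat ℚ d s j)ᵀ)) A B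
            = ((A.1 ∩ B.1).card.choose j : ℚ) * (c.choose (q - 1 - j) : ℚ) := by
        intro j _
        rw [Matrix.smul_apply, incMat_mul_transpose, smul_eq_mul]
        ring
      rw [Finset.sum_congr rfl this]
      rw [show ((A.1 ∩ B.1).card + c).choose (q - 1)
          = ∑ j ∈ Finset.range q, (A.1 ∩ B.1).card.choose j * c.choose (q - 1 - j) by
        rw [vandermonde_range, show q - 1 + 1 = q by omega]]
      push_cast
      rfl
    calc (MZ.map (Int.cast : ℤ → ℚ)).rank = (W * N).rank := by rw [hfact]
      _ ≤ W.rank := Matrix.rank_mul_le_left W N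
      _ ≤ Fintype.card {S : Finset (Fin d) // S.card = q - 1} := Matrix.rank_le_card_width W
      _ = d.choose (q - 1) := by rw [Fintype.card_finset_len, Fintype.card_fin]
  refine le_trans (Nat.sInf_le ?_) hrank
  exact ⟨Mp, hrep, rfl⟩
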